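/- Suppose β : [0,∞) → (0,∞) is continuously differentiable with β' < 0, and g : [0,1] → [0,∞) is continuously differentiable with g(0)=0 and g' > 0. If R₀ = β(0)/(μ+ν) > 1, then the equation μ(1 − (μ+ν)/β(g(I))) − (μ+ν)I = 0 has a unique solution I_e in (0,1), determining a unique endemic equilibrium (S_e, I_e) with S_e = (μ+ν)/β(g(I_e)). -/
import Mathlib


/-- If `R₀ = β(0)/(μ+ν) > 1`, the endemic equilibrium equation
`μ(1 − (μ+ν)/β(g(I))) − (μ+ν)I = 0` has a unique solution `I_e ∈ (0,1)`,
and the endemic equilibrium is `(S_e, I_e)` with `S_e = (μ+ν)/β(g(I_e))`. -/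
theorem endemic_equilibrium_exists_unique
    (μ ν : ℝ) (hμ : 0 < μ) (hν : 0 < ν)
    (β g : ℝ → ℝ)
    (hβC1 : ContDiff ℝ 1 β) (hgC1 : ContDiff ℝ 1 g)
    (hβpos : ∀ m, 0 ≤ m → 0 < β m)
    (hβ' : ∀ m, 0 ≤ m → deriv β m < 0)
    (hg0 : g 0 = 0) (hgpos : ∀ i, 0 ≤ i → 0 ≤ g i)
    (hg' : ∀ i, i ∈ Set.Icc (0:ℝ) 1 → 0 < deriv g i)
    (hR0 : 1 < β 0 / (μ + ν)) :
    ∃! Ie : ℝ, Ie ∈ Set.Ioo (0:ℝ) 1 ∧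
      μ * (1 - (μ + ν) / β (g Ie)) - (μ + ν) * Ie = 0 := by
  have hμν : 0 < μ + ν := by linarith
  set F : ℝ → ℝ := fun I => μ * (1 - (μ + ν) / β (g I)) - (μ + ν) * I with hF
  -- g is strictly monotone on [0,1]
  have hgmono : StrictMonoOn g (Set.Icc 0 1) := by
    apply strictMonoOn_of_deriv_pos (convex_Icc 0 1) hgC1.continuous.continuousOn
    intro x hx
    exact hg' x (interior_subset hx)
  -- β is strictly antitone on [0,∞)
  have hβanti : StrictAntiOn β (Set.Ici 0) := by
    apply strictAntiOn_of_deriv_neg (convex_Ici 0) hβC1.continuous.continuousOn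
    intro x hx
    exact hβ' x (le_of_lt (by simpa using hx))
  -- β(g I) positive for I ∈ [0,1]
  have hβg : ∀ I ∈ Set.Icc (0:ℝ) 1, 0 < β (g I) := fun I hI =>
    hβpos _ (hgpos I hI.1)
  -- F strictly antitone on [0,1]
  have hFanti : StrictAntiOn F (Set.Icc 0 1) := by
    intro x hx y hy hxy
    have hgx : g x < g y := hgmono hx hy hxy
    have hβxy : β (g y) < β (g x) :=
      hβanti (hgpos x hx.1) (hgpos y hy.1) hgx
    have h1 : (μ + ν) / β (g x) < (μ + ν) / β (g y) :=
      div_lt_div_of_pos_left hμν (hβg y hy) hβxy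
    have h2 : μ * (1 - (μ + ν) / β (g y)) < μ * (1 - (μ + ν) / β (g x)) := by
      apply mul_lt_mul_of_pos_left _ hμ
      linarith
    have h3 : (μ + ν) * x < (μ + ν) * y := by
      exact mul_lt_mul_of_pos_left hxy hμν
    simp only [hF]
    linarith
  -- F continuous on [0,1]
  have hFcont : ContinuousOn F (Set.Icc 0 1) := by
    apply ContinuousOn.sub
    · apply ContinuousOn.mul continuousOn_const
      apply ContinuousOn.sub continuousOn_const
      apply ContinuousOn.div continuousOn_const
      · exact (hβC1.continuous.comp hgC1.continuous).continuousOn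
      · intro x hx; exact (hβg x hx).ne'
    · exact (continuousOn_const.mul continuousOn_id)
  have hF0 : 0 < F 0 := by
    have hβ0 : 0 < β 0 := hβpos 0 le_rfl
    have : (μ + ν) / β 0 < 1 := by
      rw [div_lt_one hβ0]
      rw [lt_div_iff₀ hμν] at hR0
      linarith
    simp only [hF, hg0]
    nlinarith
  have hF1 : F 1 < 0 := by
    have hβ1 : 0 < β (g 1) := hβg 1 (by norm_num)
    have : 0 < (μ + ν) / β (g 1) := div_pos hμν hβ1
    simp only [hF]
    nlinarith
  -- existence via IVT
  have hsub : Set.Ioo (F 1) (F 0) ⊆ F '' Set.Ioo 0 1 :=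
    intermediate_value_Ioo' (by norm_num) hFcont
  obtain ⟨Ie, hIe, hFIe⟩ := hsub ⟨hF1, hF0⟩
  refine ⟨Ie, ⟨hIe, hFIe⟩, ?_⟩
  rintro y ⟨hy, hFy⟩
  have hy' : y ∈ Set.Icc (0:ℝ) 1 := Set.Ioo_subset_Icc_self hy
  have hIe' : Ie ∈ Set.Icc (0:ℝ) 1 := Set.Ioo_subset_Icc_self hIe
  rcases lt_trichotomy y Ie with h | h | h
  · have := hFanti hy' hIe' h
    rw [hFIe] at this
    simp only [hF] at this
    linarith
  · exact h
  · have := hFanti hIe' hy' h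
    rw [hFIe] at this
    simp only [hF] at this
    linarith
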